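/- Strong convergence of a single fluctuation operator: for v ∈ ℓ¹₃(L), n ∈ ℕ, ψ_n ∈ 𝒟_n, and J ∈ (1/2)ℕ₀ with 2J > n+1, ‖[F(ṽ) − F_J(v)] ψ_n‖ ≤ 4 |v|₁ n (2J)^{−1/2} ‖ψ_n‖; consequently F_J(v) → F(ṽ) in the strong resolvent sense as J → ∞. -/

import Mathlib

set_option maxHeartbeats 1000000


/-- Total particle number of an occupation-number configuration. -/
def deg {L : Type*} (m : L →₀ ℕ) : ℕ := m.sum fun _ k => k

/-- The algebraic `n`-particle subspace: the span of the occupation-number basis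
vectors with total particle number `n`. -/
def nSector {L : Type*} {F : Type*} [NormedAddCommGroup F] [InnerProductSpace ℂ F]
    (e : (L →₀ ℕ) → F) (n : ℕ) : Submodule ℂ F :=
  Submodule.span ℂ (e '' {m | deg m = n})

/-- Dyson's function `g_J(k) = max(1 − k/(2J), 0)`, written in terms of `2J`. -/
noncomputable def gDyson (twoJ : ℝ) (k : ℕ) : ℝ := max (1 - k / twoJ) 0

/-- The `ℓ¹`-norm of an `ℝ³`-valued sequence given by its rotated components
(transverse component `vt x = ṽ¹_x + iṽ²_x` and third component `v3 x = ṽ³_x`). -/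
noncomputable def l1norm {L : Type*} (vt : L → ℂ) (v3 : L → ℝ) : ℝ :=
  ∑' x, Real.sqrt (‖vt x‖ ^ 2 + v3 x ^ 2)

/-! ### Auxiliary scalar lemmas -/

lemma one_sub_sqrt_le {t : ℝ} (h0 : 0 ≤ t) (h1 : t ≤ 1) : 1 - Real.sqrt (1 - t) ≤ t := by
  nlinarith [Real.sq_sqrt (by linarith : (0:ℝ) ≤ 1 - t), Real.sqrt_nonneg (1 - t),
    Real.sqrt_le_one.2 (by linarith : 1 - t ≤ 1)]

lemma sqrt_sub_sqrt_g_le {a t K : ℝ} (ha : 0 ≤ a) (ht0 : 0 ≤ t) (htK : t ≤ K) (hK : 0 < K) :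
    Real.sqrt a - Real.sqrt (a * max (1 - t / K) 0) ≤ Real.sqrt a * t / K := by
  have htK1 : t / K ≤ 1 := (div_le_one hK).2 htK
  have ht0' : 0 ≤ t / K := div_nonneg ht0 hK.le
  rw [max_eq_left (by linarith), Real.sqrt_mul ha]
  have h := one_sub_sqrt_le ht0' htK1
  have hsa := Real.sqrt_nonneg a
  have h2 : Real.sqrt a * (1 - Real.sqrt (1 - t / K)) ≤ Real.sqrt a * (t / K) :=
    mul_le_mul_of_nonneg_left h hsa
  calc Real.sqrt a - Real.sqrt a * Real.sqrt (1 - t / K)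
      = Real.sqrt a * (1 - Real.sqrt (1 - t / K)) := by ring
    _ ≤ Real.sqrt a * (t / K) := h2
    _ = Real.sqrt a * t / K := by ring

lemma sqrt_g_le_sqrt {a t K : ℝ} (ha : 0 ≤ a) (ht0 : 0 ≤ t) (hK : 0 ≤ K) :
    Real.sqrt (a * max (1 - t / K) 0) ≤ Real.sqrt a := by
  apply Real.sqrt_le_sqrt
  have h0 : 0 ≤ t / K := div_nonneg ht0 hK
  calc a * max (1 - t / K) 0 ≤ a * 1 :=
        mul_le_mul_of_nonneg_left (max_le (by linarith) one_pos.le) ha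
    _ = a := mul_one a

lemma step_le {a t n K : ℝ} (haK : a ≤ K) (ht0 : 0 ≤ t) (htn : t ≤ n) (hK : 0 < K) :
    Real.sqrt a * t / K ≤ n / Real.sqrt K := by
  have h1 : Real.sqrt a ≤ Real.sqrt K := Real.sqrt_le_sqrt haK
  have h2 : Real.sqrt a * t ≤ Real.sqrt K * n :=
    mul_le_mul h1 htn ht0 (Real.sqrt_nonneg K)
  have hsq : (0:ℝ) < Real.sqrt K := Real.sqrt_pos.2 hK
  have h3 : Real.sqrt K * n / K = n / Real.sqrt K := by
    rw [div_eq_div_iff (ne_of_gt hK) (ne_of_gt hsq)]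
    linear_combination n * Real.mul_self_sqrt hK.le
  calc Real.sqrt a * t / K ≤ Real.sqrt K * n / K := div_le_div_of_nonneg_right h2 hK.le
    _ = n / Real.sqrt K := h3

lemma sqrt_four_div {K : ℝ} (hK : 0 < K) : Real.sqrt (4 / K) = 2 / Real.sqrt K := by
  rw [show (4:ℝ) / K = (2 / Real.sqrt K) ^ 2 by
    rw [div_pow, Real.sq_sqrt hK.le]; norm_num]
  exact Real.sqrt_sq (by positivity)

/-! ### Orthonormal-combination lemmas -/

lemma on_norm_comb {I F : Type*} [NormedAddCommGroup F] [InnerProductSpace ℂ F]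
    {ι : Type*} {e : I → F} (he : Orthonormal ℂ e)
    (s : Finset ι) (σ : ι → I) (hσ : Set.InjOn σ s) (d : ι → ℂ) :
    ‖∑ i ∈ s, d i • e (σ i)‖ = Real.sqrt (∑ i ∈ s, ‖d i‖ ^ 2) := by
  have hon : Orthonormal ℂ (fun i : s => e (σ i)) := by
    apply he.comp
    intro i j hij
    exact Subtype.ext (hσ i.2 j.2 hij)
  have h2 : (‖∑ i ∈ s, d i • e (σ i)‖ : ℝ) ^ 2 = ∑ i ∈ s, ‖d i‖ ^ 2 := by
    rw [(Finset.sum_coe_sort s fun i => d i • e (σ i)).symm,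
      ← inner_self_eq_norm_sq (𝕜 := ℂ), hon.inner_sum, map_sum,
      ← Finset.sum_coe_sort s fun i => ‖d i‖ ^ 2]
    apply Finset.sum_congr rfl
    intro i _
    rw [RCLike.conj_mul]
    norm_cast
  rw [← h2, Real.sqrt_sq (norm_nonneg _)]

lemma on_comb_le {I F : Type*} [NormedAddCommGroup F] [InnerProductSpace ℂ F]
    {ι : Type*} {e : I → F} (he : Orthonormal ℂ e)
    (s : Finset ι) (σ : ι → I) (hσ : Set.InjOn σ s) (d c : ι → ℂ)
    {β : ℝ} (hβ : 0 ≤ β) (hd : ∀ i ∈ s, ‖d i‖ ≤ β) :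
    ‖∑ i ∈ s, (d i * c i) • e (σ i)‖ ≤ β * Real.sqrt (∑ i ∈ s, ‖c i‖ ^ 2) := by
  rw [on_norm_comb he s σ hσ]
  rw [show β * Real.sqrt (∑ i ∈ s, ‖c i‖ ^ 2)
      = Real.sqrt (β ^ 2 * ∑ i ∈ s, ‖c i‖ ^ 2) by
    rw [Real.sqrt_mul (sq_nonneg β), Real.sqrt_sq hβ]]
  apply Real.sqrt_le_sqrt
  rw [Finset.mul_sum]
  apply Finset.sum_le_sum
  intro i hi
  rw [norm_mul, mul_pow]
  exact mul_le_mul_of_nonneg_right (pow_le_pow_left₀ (norm_nonneg _) (hd i hi) 2)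
    (sq_nonneg _)

lemma apply_le_deg {L : Type*} (m : L →₀ ℕ) (x : L) : m x ≤ deg m := by
  unfold deg
  by_cases hx : x ∈ m.support
  · exact Finset.single_le_sum (f := fun y => m y) (fun _ _ => Nat.zero_le _) hx
  · simp [Finsupp.notMem_support_iff.1 hx]

/-! ### The difference coefficients -/

noncomputable def wA {L : Type*} (vt : L → ℂ) (k : ℕ) (x : L) (m : L →₀ ℕ) : ℂ :=
  vt x * Real.sqrt (m x + 1) - vt x * Real.sqrt ((m x + 1) * gDyson (k : ℝ) (m x))

noncomputable def wB {L : Type*} (vt : L → ℂ) (k : ℕ) (x : L) (m : L →₀ ℕ) : ℂ :=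
  (starRingEnd ℂ) (vt x) * Real.sqrt (m x) -
    (starRingEnd ℂ) (vt x) * Real.sqrt ((m x) * gDyson (k : ℝ) (m x - 1))

noncomputable def wC {L : Type*} (v3 : L → ℝ) (k : ℕ) (x : L) (m : L →₀ ℕ) : ℂ :=
  ((Real.sqrt (4 / (k : ℝ)) * v3 x * m x : ℝ) : ℂ)

noncomputable def wfun {L F : Type*} [NormedAddCommGroup F] [InnerProductSpace ℂ F]
    (e : (L →₀ ℕ) → F) (vt : L → ℂ) (v3 : L → ℝ) (k : ℕ) (x : L) (m : L →₀ ℕ) : F :=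
  wA vt k x m • e (m + Finsupp.single x 1) + wB vt k x m • e (m - Finsupp.single x 1)
    + wC v3 k x m • e m

lemma wA_bound {L : Type*} (vt : L → ℂ) (k n : ℕ) (x : L) (m : L →₀ ℕ)
    (hj : m x ≤ n) (hk : (n : ℝ) + 1 ≤ k) :
    ‖wA vt k x m‖ ≤ ‖vt x‖ * ((n : ℝ) / Real.sqrt k) := by
  have hn0 : (0:ℝ) ≤ n := Nat.cast_nonneg n
  have hK : (0:ℝ) < k := by linarith
  have hjn : ((m x : ℝ)) ≤ n := by exact_mod_cast hj
  have hj0 : (0:ℝ) ≤ (m x : ℝ) := Nat.cast_nonneg _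
  have heq : wA vt k x m
      = vt x * ((Real.sqrt ((m x : ℝ) + 1)
          - Real.sqrt (((m x : ℝ) + 1) * gDyson (k : ℝ) (m x)) : ℝ) : ℂ) := by
    unfold wA; push_cast; ring
  rw [heq, norm_mul, Complex.norm_real, Real.norm_eq_abs]
  apply mul_le_mul_of_nonneg_left _ (norm_nonneg _)
  have hnonneg : 0 ≤ Real.sqrt ((m x : ℝ) + 1)
      - Real.sqrt (((m x : ℝ) + 1) * gDyson (k : ℝ) (m x)) := by
    have := sqrt_g_le_sqrt (a := (m x : ℝ) + 1) (t := (m x : ℝ)) (K := (k:ℝ))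
      (by linarith) hj0 hK.le
    unfold gDyson; linarith [this]
  rw [abs_of_nonneg hnonneg]
  calc Real.sqrt ((m x : ℝ) + 1) - Real.sqrt (((m x : ℝ) + 1) * gDyson (k : ℝ) (m x))
      ≤ Real.sqrt ((m x : ℝ) + 1) * (m x : ℝ) / k :=
        sqrt_sub_sqrt_g_le (by linarith) hj0 (by linarith) hK
    _ ≤ (n : ℝ) / Real.sqrt k := step_le (by linarith) hj0 hjn hK

lemma wB_bound {L : Type*} (vt : L → ℂ) (k n : ℕ) (x : L) (m : L →₀ ℕ)
    (hj : m x ≤ n) (hk : (n : ℝ) + 1 ≤ k) :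
    ‖wB vt k x m‖ ≤ ‖vt x‖ * ((n : ℝ) / Real.sqrt k) := by
  have hn0 : (0:ℝ) ≤ n := Nat.cast_nonneg n
  have hK : (0:ℝ) < k := by linarith
  rcases Nat.eq_zero_or_pos (m x) with h0 | h0
  · have hz : wB vt k x m = 0 := by
      unfold wB; rw [h0]; push_cast; simp
    rw [hz, norm_zero]
    positivity
  · have hjn : ((m x : ℝ)) ≤ n := by exact_mod_cast hj
    have hj0 : (0:ℝ) ≤ (m x : ℝ) := Nat.cast_nonneg _
    have hcast : ((m x - 1 : ℕ) : ℝ) = (m x : ℝ) - 1 := by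
      rw [Nat.cast_sub h0]; norm_num
    have h1 : (1:ℝ) ≤ (m x : ℝ) := by exact_mod_cast h0
    have heq : wB vt k x m
        = (starRingEnd ℂ) (vt x) * ((Real.sqrt (m x : ℝ)
            - Real.sqrt ((m x : ℝ) * gDyson (k : ℝ) (m x - 1)) : ℝ) : ℂ) := by
      unfold wB; push_cast; ring
    rw [heq, norm_mul, RCLike.norm_conj, Complex.norm_real,
      Real.norm_eq_abs]
    apply mul_le_mul_of_nonneg_left _ (norm_nonneg _)
    have hnonneg : 0 ≤ Real.sqrt (m x : ℝ)
        - Real.sqrt ((m x : ℝ) * gDyson (k : ℝ) (m x - 1)) := by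
      have := sqrt_g_le_sqrt (a := (m x : ℝ)) (t := ((m x - 1 : ℕ) : ℝ)) (K := (k:ℝ))
        hj0 (Nat.cast_nonneg _) hK.le
      unfold gDyson; linarith [this]
    rw [abs_of_nonneg hnonneg]
    calc Real.sqrt (m x : ℝ) - Real.sqrt ((m x : ℝ) * gDyson (k : ℝ) (m x - 1))
        ≤ Real.sqrt (m x : ℝ) * ((m x - 1 : ℕ) : ℝ) / k :=
          sqrt_sub_sqrt_g_le hj0 (Nat.cast_nonneg _) (by rw [hcast]; linarith) hK
      _ ≤ (n : ℝ) / Real.sqrt k :=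
          step_le (by linarith) (Nat.cast_nonneg _) (by rw [hcast]; linarith) hK

lemma wC_bound {L : Type*} (v3 : L → ℝ) (k n : ℕ) (x : L) (m : L →₀ ℕ)
    (hj : m x ≤ n) (hk : (n : ℝ) + 1 ≤ k) :
    ‖wC v3 k x m‖ ≤ |v3 x| * (2 * (n : ℝ) / Real.sqrt k) := by
  have hn0 : (0:ℝ) ≤ n := Nat.cast_nonneg n
  have hK : (0:ℝ) < k := by linarith
  have hjn : ((m x : ℝ)) ≤ n := by exact_mod_cast hj
  have hsq : (0:ℝ) < Real.sqrt k := Real.sqrt_pos.2 hK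
  unfold wC
  rw [Complex.norm_real, Real.norm_eq_abs, abs_mul, abs_mul,
    abs_of_nonneg (Real.sqrt_nonneg _), Nat.abs_cast, sqrt_four_div hK]
  rw [div_eq_mul_inv, div_eq_mul_inv]
  calc 2 * (Real.sqrt k)⁻¹ * |v3 x| * (m x : ℝ)
      = 2 * (|v3 x| * (m x : ℝ)) * (Real.sqrt k)⁻¹ := by ring
    _ ≤ 2 * (|v3 x| * n) * (Real.sqrt k)⁻¹ := by
        apply mul_le_mul_of_nonneg_right _ (by positivity)
        have := mul_le_mul_of_nonneg_left hjn (abs_nonneg (v3 x))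
        linarith
    _ = |v3 x| * (2 * n * (Real.sqrt k)⁻¹) := by ring

/-- Strong convergence of a single fluctuation operator: for `v ∈ ℓ¹₃(L)`,
`ψ` in the `n`-particle subspace and `2J > n+1`,
`‖[F(ṽ) − F_J(v)]ψ‖ ≤ 4|v|₁ n (2J)^(−1/2) ‖ψ‖`; consequently `F_J(v)ψ → F(ṽ)ψ`
as `J → ∞` (strong convergence on the finite-particle domain, hence strong
resolvent convergence). -/
theorem stmt14 {L : Type*} {F : Type*} [NormedAddCommGroup F] [InnerProductSpace ℂ F]
    [CompleteSpace F]
    (e : (L →₀ ℕ) → F) (he : Orthonormal ℂ e)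
    (vt : L → ℂ) (v3 : L → ℝ)
    (hv1 : Summable fun x => Real.sqrt (‖vt x‖ ^ 2 + v3 x ^ 2))
    -- the Dyson operators `F_J(v)`, indexed by `k = 2J ∈ ℕ`
    (FJ : ℕ → (F →ₗ[ℂ] F))
    (hFJ0 : ∀ (k : ℕ) (m : L →₀ ℕ), (∃ x, (k : ℝ) < m x) → FJ k (e m) = 0)
    (hFJ : ∀ (k : ℕ) (m : L →₀ ℕ), 0 < k → (∀ x, m x ≤ k) →
      FJ k (e m) = ∑' x : L,
          (((vt x) * Real.sqrt ((m x + 1) * gDyson (k : ℝ) (m x))) • e (m + Finsupp.single x 1)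
            + ((starRingEnd ℂ) (vt x) * Real.sqrt ((m x) * gDyson (k : ℝ) (m x - 1))) •
                e (m - Finsupp.single x 1)
            + (-((Real.sqrt (4 / (k : ℝ)) * v3 x * m x : ℝ) : ℂ)) • e m))
    -- the boson field operator `F(ṽ)`
    (Fb : F →ₗ[ℂ] F)
    (hFb : ∀ m : L →₀ ℕ, Fb (e m) = ∑' x : L,
          (((vt x) * Real.sqrt (m x + 1)) • e (m + Finsupp.single x 1)
            + ((starRingEnd ℂ) (vt x) * Real.sqrt (m x)) • e (m - Finsupp.single x 1))) :
    (∀ (k : ℕ) (n : ℕ), (n : ℝ) + 1 < k → ∀ ψ ∈ nSector e n,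
        ‖Fb ψ - FJ k ψ‖ ≤ 4 * l1norm vt v3 * n / Real.sqrt k * ‖ψ‖)
      ∧ ∀ (n : ℕ) (ψ : F), ψ ∈ nSector e n →
          Filter.Tendsto (fun k : ℕ => FJ k ψ) Filter.atTop (nhds (Fb ψ)) := by
  classical
  set Φ : L → ℝ := fun x => Real.sqrt (‖vt x‖ ^ 2 + v3 x ^ 2) with hΦ
  have hΦ0 : ∀ x, 0 ≤ Φ x := fun x => Real.sqrt_nonneg _
  have habs : ∀ x, ‖vt x‖ ≤ Φ x := by
    intro x
    rw [hΦ, show ‖vt x‖ = Real.sqrt (‖vt x‖ ^ 2) from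
      (Real.sqrt_sq (norm_nonneg _)).symm]
    exact Real.sqrt_le_sqrt (by nlinarith [sq_nonneg (v3 x)])
  have hv3abs : ∀ x, |v3 x| ≤ Φ x := by
    intro x
    rw [hΦ, ← Real.sqrt_sq_eq_abs]
    exact Real.sqrt_le_sqrt (by nlinarith [norm_nonneg (vt x), sq_nonneg (‖vt x‖)])
  have key : ∀ (k n : ℕ), (n : ℝ) + 1 < k → ∀ ψ ∈ nSector e n,
      ‖Fb ψ - FJ k ψ‖ ≤ 4 * l1norm vt v3 * n / Real.sqrt k * ‖ψ‖ := by
    intro k n hklt ψ hψ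
    have hn0 : (0:ℝ) ≤ n := Nat.cast_nonneg n
    have hK : (0:ℝ) < k := by linarith
    have hk0 : 0 < k := by exact_mod_cast hK
    have hk1 : (n : ℝ) + 1 ≤ k := hklt.le
    have hsqK : (0:ℝ) < Real.sqrt k := Real.sqrt_pos.2 hK
    have hnk : n ≤ k := by
      have : (n:ℝ) ≤ k := by linarith
      exact_mod_cast this
    rw [nSector, Finsupp.mem_span_image_iff_linearCombination] at hψ
    obtain ⟨c, hcs, rfl⟩ := hψ
    set s := c.support with hs
    have hsub := (Finsupp.mem_supported ℂ c).1 hcs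
    have hdeg : ∀ m ∈ s, ∀ y, m y ≤ n := by
      intro m hm y
      have hd : deg m = n := hsub hm
      exact hd ▸ apply_le_deg m y
    have hmk : ∀ m ∈ s, ∀ y, m y ≤ k := fun m hm y => le_trans (hdeg m hm y) hnk
    have hψeq : (Finsupp.linearCombination ℂ e) c = ∑ m ∈ s, c m • e m := by
      rw [Finsupp.linearCombination_apply, Finsupp.sum]
    -- summability of the two defining series
    have hsqle : ∀ m : L →₀ ℕ, (∀ y, m y ≤ n) → ∀ x,
        Real.sqrt ((m x : ℝ) + 1) ≤ Real.sqrt ((n : ℝ) + 1) := by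
      intro m hm x
      apply Real.sqrt_le_sqrt
      have : ((m x : ℝ)) ≤ n := by exact_mod_cast hm x
      linarith
    have hsqle' : ∀ m : L →₀ ℕ, (∀ y, m y ≤ n) → ∀ x,
        Real.sqrt ((m x : ℝ)) ≤ Real.sqrt ((n : ℝ) + 1) := by
      intro m hm x
      apply Real.sqrt_le_sqrt
      have : ((m x : ℝ)) ≤ n := by exact_mod_cast hm x
      linarith
    have hu : ∀ m ∈ s, Summable (fun x : L =>
        ((vt x * Real.sqrt (m x + 1)) • e (m + Finsupp.single x 1)
          + ((starRingEnd ℂ) (vt x) * Real.sqrt (m x)) • e (m - Finsupp.single x 1))) := by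
      intro m hm
      apply Summable.of_norm_bounded (hv1.mul_left (2 * Real.sqrt ((n:ℝ)+1)))
      intro x
      have h1 : ‖(vt x * (Real.sqrt ((m x : ℝ) + 1) : ℝ)) • e (m + Finsupp.single x 1)‖
          ≤ ‖vt x‖ * Real.sqrt ((n:ℝ)+1) := by
        rw [norm_smul, he.1 _, mul_one, norm_mul, Complex.norm_real,
          Real.norm_eq_abs, abs_of_nonneg (Real.sqrt_nonneg _)]
        exact mul_le_mul_of_nonneg_left (hsqle m (hdeg m hm) x) (norm_nonneg _)
      have h2 : ‖((starRingEnd ℂ) (vt x) * (Real.sqrt ((m x : ℝ)) : ℝ)) •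
          e (m - Finsupp.single x 1)‖ ≤ ‖vt x‖ * Real.sqrt ((n:ℝ)+1) := by
        rw [norm_smul, he.1 _, mul_one, norm_mul, RCLike.norm_conj,
          Complex.norm_real, Real.norm_eq_abs, abs_of_nonneg (Real.sqrt_nonneg _)]
        exact mul_le_mul_of_nonneg_left (hsqle' m (hdeg m hm) x) (norm_nonneg _)
      refine le_trans (norm_add_le _ _) (le_trans (add_le_add h1 h2) ?_)
      nlinarith [habs x, Real.sqrt_nonneg ((n:ℝ)+1), norm_nonneg (vt x)]
    have ht : ∀ m ∈ s, Summable (fun x : L =>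
        ((vt x * Real.sqrt ((m x + 1) * gDyson (k : ℝ) (m x))) • e (m + Finsupp.single x 1)
          + ((starRingEnd ℂ) (vt x) * Real.sqrt ((m x) * gDyson (k : ℝ) (m x - 1))) •
              e (m - Finsupp.single x 1)
          + (-((Real.sqrt (4 / (k : ℝ)) * v3 x * m x : ℝ) : ℂ)) • e m)) := by
      intro m hm
      apply Summable.of_norm_bounded (hv1.mul_left (2 * Real.sqrt ((n:ℝ)+1) + 2 * n))
      intro x
      have hg1 : Real.sqrt (((m x : ℝ) + 1) * gDyson (k : ℝ) (m x))
          ≤ Real.sqrt ((n:ℝ)+1) := by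
        refine le_trans ?_ (hsqle m (hdeg m hm) x)
        unfold gDyson
        exact sqrt_g_le_sqrt (by positivity) (Nat.cast_nonneg _) hK.le
      have hg2 : Real.sqrt ((m x : ℝ) * gDyson (k : ℝ) (m x - 1))
          ≤ Real.sqrt ((n:ℝ)+1) := by
        refine le_trans ?_ (hsqle' m (hdeg m hm) x)
        unfold gDyson
        exact sqrt_g_le_sqrt (Nat.cast_nonneg _) (Nat.cast_nonneg _) hK.le
      have h1 : ‖(vt x * (Real.sqrt (((m x : ℝ) + 1) * gDyson (k : ℝ) (m x)) : ℝ)) •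
          e (m + Finsupp.single x 1)‖ ≤ ‖vt x‖ * Real.sqrt ((n:ℝ)+1) := by
        rw [norm_smul, he.1 _, mul_one, norm_mul, Complex.norm_real,
          Real.norm_eq_abs, abs_of_nonneg (Real.sqrt_nonneg _)]
        exact mul_le_mul_of_nonneg_left hg1 (norm_nonneg _)
      have h2 : ‖((starRingEnd ℂ) (vt x) *
          (Real.sqrt ((m x : ℝ) * gDyson (k : ℝ) (m x - 1)) : ℝ)) •
          e (m - Finsupp.single x 1)‖ ≤ ‖vt x‖ * Real.sqrt ((n:ℝ)+1) := by
        rw [norm_smul, he.1 _, mul_one, norm_mul, RCLike.norm_conj,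
          Complex.norm_real, Real.norm_eq_abs, abs_of_nonneg (Real.sqrt_nonneg _)]
        exact mul_le_mul_of_nonneg_left hg2 (norm_nonneg _)
      have h3 : ‖(-((Real.sqrt (4 / (k : ℝ)) * v3 x * m x : ℝ) : ℂ)) • e m‖
          ≤ |v3 x| * (2 * (n : ℝ)) := by
        rw [norm_smul, he.1 _, mul_one, norm_neg]
        have hb := wC_bound v3 k n x m (hdeg m hm x) hk1
        have hsq1 : (1:ℝ) ≤ Real.sqrt k := by
          rw [show (1:ℝ) = Real.sqrt 1 from Real.sqrt_one.symm]
          exact Real.sqrt_le_sqrt (by linarith)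
        have : |v3 x| * (2 * (n : ℝ) / Real.sqrt k) ≤ |v3 x| * (2 * n) := by
          apply mul_le_mul_of_nonneg_left _ (abs_nonneg _)
          rw [div_le_iff₀ hsqK]
          nlinarith
        exact le_trans hb this
      refine le_trans norm_add₃_le (le_trans (add_le_add (add_le_add h1 h2) h3) ?_)
      nlinarith [habs x, hv3abs x, Real.sqrt_nonneg ((n:ℝ)+1),
        norm_nonneg (vt x), abs_nonneg (v3 x), hn0]
    -- identity for the difference on basis vectors
    have hident : ∀ m ∈ s, Fb (e m) - FJ k (e m) = ∑' x, wfun e vt v3 k x m := by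
      intro m hm
      rw [hFb m, hFJ k m hk0 (hmk m hm), ← Summable.tsum_sub (hu m hm) (ht m hm)]
      apply tsum_congr
      intro x
      unfold wfun wA wB wC
      module
    have hw : ∀ m ∈ s, Summable (fun x => wfun e vt v3 k x m) := by
      intro m hm
      apply ((hu m hm).sub (ht m hm)).congr
      intro x
      unfold wfun wA wB wC
      module
    -- the difference applied to ψ
    have hDψ : Fb ((Finsupp.linearCombination ℂ e) c) - FJ k ((Finsupp.linearCombination ℂ e) c)
        = ∑' x, ∑ m ∈ s, c m • wfun e vt v3 k x m := by
      rw [hψeq, map_sum, map_sum, ← Finset.sum_sub_distrib]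
      have h1 : ∀ m ∈ s, Fb (c m • e m) - FJ k (c m • e m)
          = c m • ∑' x, wfun e vt v3 k x m := by
        intro m hm
        rw [map_smul, map_smul, ← smul_sub, hident m hm]
      rw [Finset.sum_congr rfl h1]
      have h2 : ∀ m ∈ s, c m • ∑' x, wfun e vt v3 k x m
          = ∑' x, c m • wfun e vt v3 k x m := by
        intro m hm
        exact (((hw m hm).hasSum.const_smul (c m)).tsum_eq).symm
      rw [Finset.sum_congr rfl h2]
      exact (Summable.tsum_finsetSum (fun m hm => (hw m hm).const_smul (c m))).symm
    set Sc : ℝ := ∑ m ∈ s, ‖c m‖ ^ 2 with hSc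
    have hSc0 : 0 ≤ Sc := Finset.sum_nonneg fun m _ => sq_nonneg _
    have hψnorm : ‖(Finsupp.linearCombination ℂ e) c‖ = Real.sqrt Sc := by
      rw [hψeq]
      exact on_norm_comb he s id (Set.injOn_id _) c
    set r : ℝ := 4 * (n : ℝ) / Real.sqrt k * Real.sqrt Sc with hr
    have hr0 : 0 ≤ r := by positivity
    -- the per-site estimate
    have hgx : ∀ x, ‖∑ m ∈ s, c m • wfun e vt v3 k x m‖ ≤ Φ x * r := by
      intro x
      have hsplit : ∑ m ∈ s, c m • wfun e vt v3 k x m =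
          (∑ m ∈ s, (wA vt k x m * c m) • e (m + Finsupp.single x 1))
          + (∑ m ∈ s, (wB vt k x m * c m) • e (m - Finsupp.single x 1))
          + (∑ m ∈ s, (wC v3 k x m * c m) • e m) := by
        rw [← Finset.sum_add_distrib, ← Finset.sum_add_distrib]
        refine Finset.sum_congr rfl fun m _ => ?_
        unfold wfun
        module
      rw [hsplit]
      have hinjA : Set.InjOn (fun m : L →₀ ℕ => m + Finsupp.single x 1) s := by
        intro m _ m' _ h
        ext y
        have hy := DFunLike.congr_fun h y
        simp only [Finsupp.add_apply] at hy
        omega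
      have hA : ‖∑ m ∈ s, (wA vt k x m * c m) • e (m + Finsupp.single x 1)‖
          ≤ ‖vt x‖ * ((n:ℝ) / Real.sqrt k) * Real.sqrt Sc :=
        on_comb_le he s _ hinjA _ c (by positivity)
          (fun m hm => wA_bound vt k n x m (hdeg m hm x) hk1)
      -- the lowering part
      have hBfilter : ∑ m ∈ s, (wB vt k x m * c m) • e (m - Finsupp.single x 1)
          = ∑ m ∈ s.filter (fun m => m x ≠ 0),
              (wB vt k x m * c m) • e (m - Finsupp.single x 1) := by
        symm
        apply Finset.sum_filter_of_ne
        intro m _ hne hmx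
        apply hne
        have hz : wB vt k x m = 0 := by
          unfold wB; rw [hmx]; push_cast; simp
        rw [hz, zero_mul, zero_smul]
      have hinjB : Set.InjOn (fun m : L →₀ ℕ => m - Finsupp.single x 1)
          (s.filter (fun m => m x ≠ 0)) := by
        intro m hm m' hm' h
        simp only [Finset.coe_filter, Set.mem_setOf_eq] at hm hm'
        obtain ⟨-, hm⟩ := hm
        obtain ⟨-, hm'⟩ := hm'
        ext y
        have hy := DFunLike.congr_fun h y
        simp only [Finsupp.tsub_apply, Finsupp.single_apply] at hy
        rcases eq_or_ne x y with rfl | hxy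
        · simp at hy
          omega
        · simp [hxy] at hy
          omega
      have hB : ‖∑ m ∈ s, (wB vt k x m * c m) • e (m - Finsupp.single x 1)‖
          ≤ ‖vt x‖ * ((n:ℝ) / Real.sqrt k) * Real.sqrt Sc := by
        rw [hBfilter]
        refine le_trans (on_comb_le he _ _ hinjB _ c (by positivity)
          (fun m hm => wB_bound vt k n x m (hdeg m (Finset.filter_subset _ _ hm) x) hk1)) ?_
        apply mul_le_mul_of_nonneg_left _ (by positivity)
        apply Real.sqrt_le_sqrt
        exact Finset.sum_le_sum_of_subset_of_nonneg (Finset.filter_subset _ _)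
          (fun i _ _ => sq_nonneg _)
      have hC : ‖∑ m ∈ s, (wC v3 k x m * c m) • e m‖
          ≤ |v3 x| * (2 * (n:ℝ) / Real.sqrt k) * Real.sqrt Sc := by
        have := on_comb_le he s id (Set.injOn_id _) (wC v3 k x) c
          (β := |v3 x| * (2 * (n:ℝ) / Real.sqrt k)) (by positivity)
          (fun m hm => wC_bound v3 k n x m (hdeg m hm x) hk1)
        simpa using this
      refine le_trans norm_add₃_le (le_trans (add_le_add (add_le_add hA hB) hC) ?_)
      rw [hr]
      have hd0 : 0 ≤ (n:ℝ) / Real.sqrt k := by positivity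
      have hs0 : 0 ≤ Real.sqrt Sc := Real.sqrt_nonneg _
      have base : 0 ≤ ((n:ℝ) / Real.sqrt k) * Real.sqrt Sc := mul_nonneg hd0 hs0
      calc ‖vt x‖ * ((n:ℝ) / Real.sqrt k) * Real.sqrt Sc
            + ‖vt x‖ * ((n:ℝ) / Real.sqrt k) * Real.sqrt Sc
            + |v3 x| * (2 * (n:ℝ) / Real.sqrt k) * Real.sqrt Sc
          = (2 * ‖vt x‖ + 2 * |v3 x|) *
              (((n:ℝ) / Real.sqrt k) * Real.sqrt Sc) := by ring
        _ ≤ (4 * Φ x) * (((n:ℝ) / Real.sqrt k) * Real.sqrt Sc) := by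
            apply mul_le_mul_of_nonneg_right _ base
            linarith [habs x, hv3abs x]
        _ = Φ x * (4 * (n:ℝ) / Real.sqrt k * Real.sqrt Sc) := by ring
    have hΦr : Summable (fun x => Φ x * r) := hv1.mul_right r
    have hgsum : Summable (fun x => ‖∑ m ∈ s, c m • wfun e vt v3 k x m‖) :=
      Summable.of_nonneg_of_le (fun _ => norm_nonneg _) hgx hΦr
    calc ‖Fb ((Finsupp.linearCombination ℂ e) c) - FJ k ((Finsupp.linearCombination ℂ e) c)‖
        = ‖∑' x, ∑ m ∈ s, c m • wfun e vt v3 k x m‖ := by rw [hDψ]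
      _ ≤ ∑' x, ‖∑ m ∈ s, c m • wfun e vt v3 k x m‖ := norm_tsum_le_tsum_norm hgsum
      _ ≤ ∑' x, Φ x * r := Summable.tsum_le_tsum hgx hgsum hΦr
      _ = l1norm vt v3 * r := by rw [tsum_mul_right]; rfl
      _ = 4 * l1norm vt v3 * n / Real.sqrt k * ‖(Finsupp.linearCombination ℂ e) c‖ := by
          rw [hψnorm, hr]; ring
  refine ⟨key, ?_⟩
  intro n ψ hψ
  rw [tendsto_iff_norm_sub_tendsto_zero]
  have hC : Filter.Tendsto (fun k : ℕ => 4 * l1norm vt v3 * (n:ℝ) / Real.sqrt k * ‖ψ‖)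
      Filter.atTop (nhds 0) := by
    have h1 : Filter.Tendsto (fun k : ℕ => (Real.sqrt k)⁻¹) Filter.atTop (nhds 0) := by
      have h0 : Filter.Tendsto (fun k : ℕ => ((k : ℝ))⁻¹) Filter.atTop (nhds 0) :=
        tendsto_inv_atTop_nhds_zero_nat
      have h2 := (Real.continuous_sqrt.tendsto 0).comp h0
      simpa [Function.comp_def, Real.sqrt_inv] using h2
    have heq : (fun k : ℕ => 4 * l1norm vt v3 * (n:ℝ) / Real.sqrt k * ‖ψ‖)
        = fun k : ℕ => (4 * l1norm vt v3 * (n:ℝ) * ‖ψ‖) * (Real.sqrt k)⁻¹ := by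
      funext k; ring
    rw [heq]
    simpa using h1.const_mul (4 * l1norm vt v3 * (n:ℝ) * ‖ψ‖)
  apply squeeze_zero' (Filter.Eventually.of_forall fun k => norm_nonneg _) _ hC
  filter_upwards [Filter.eventually_ge_atTop (n + 2)] with k hk2
  have hlt : (n : ℝ) + 1 < k := by
    have : ((n + 2 : ℕ) : ℝ) ≤ k := by exact_mod_cast hk2
    push_cast at this
    linarith
  rw [norm_sub_rev]
  exact key k n hlt ψ hψ
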